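/- Let S be a p×p Hermitian positive semidefinite complex matrix, z a complex number with Im z > 0, and x a p-dimensional complex vector. Then the imaginary part of z·x*(S − zI)⁻¹x is nonnegative, and consequently |1/(1 + x*(S − zI)⁻¹x)| ≤ |z| / Im z. -/

import Mathlib

open Matrix
open scoped ComplexOrder

/-- Bound on `β_k = (1 + x* Q(z) x)⁻¹` from Lemma "bd" of the paper. -/
theorem beta_k_bound {p : ℕ} (S : Matrix (Fin p) (Fin p) ℂ)
    (hS : S.PosSemidef) (z : ℂ) (hz : 0 < z.im) (x : Fin p → ℂ) :
    0 ≤ (z * (star x ⬝ᵥ ((S - z • 1)⁻¹ *ᵥ x))).im ∧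
      ‖1 / (1 + star x ⬝ᵥ ((S - z • 1)⁻¹ *ᵥ x))‖ ≤
        ‖z‖ / z.im := by
  set A : Matrix (Fin p) (Fin p) ℂ := S - z • 1 with hA
  have hdet : IsUnit A.det := by
    rw [isUnit_iff_ne_zero]
    intro h0
    obtain ⟨v, hv, hAv⟩ := Matrix.exists_mulVec_eq_zero_iff.2 h0
    have h1 : S *ᵥ v = z • v := by
      have h2 : A *ᵥ v = S *ᵥ v - z • v := by
        rw [hA, Matrix.sub_mulVec, Matrix.smul_mulVec, Matrix.one_mulVec]
      rw [hAv] at h2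
      exact (sub_eq_zero.mp h2.symm)
    have hq := hS.dotProduct_mulVec_nonneg v
    rw [h1, dotProduct_smul] at hq
    have ht : 0 ≤ star v ⬝ᵥ v := dotProduct_star_self_nonneg v
    have ht0 : star v ⬝ᵥ v ≠ 0 := fun h => hv (dotProduct_star_self_eq_zero.mp h)
    obtain ⟨htre, htim⟩ := Complex.nonneg_iff.mp ht
    have htre' : 0 < (star v ⬝ᵥ v).re := by
      rcases htre.lt_or_eq with h | h
      · exact h
      · exact absurd (Complex.ext h.symm htim.symm) ht0
    obtain ⟨_, him⟩ := Complex.nonneg_iff.mp hq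
    rw [smul_eq_mul, Complex.mul_im, ← htim] at him
    nlinarith
  set w := A⁻¹ *ᵥ x with hw
  have hx : A *ᵥ w = x := by
    rw [hw, Matrix.mulVec_mulVec, Matrix.mul_nonsing_inv _ hdet, Matrix.one_mulVec]
  set s := star w ⬝ᵥ (S *ᵥ w) with hsdef
  set t := star w ⬝ᵥ w with htdef
  have hq : star x ⬝ᵥ w = s - (starRingEnd ℂ) z * t := by
    rw [← hx, Matrix.star_mulVec, ← Matrix.dotProduct_mulVec]
    have hAH : Aᴴ = S - (starRingEnd ℂ) z • 1 := by
      rw [hA, conjTranspose_sub, hS.1.eq, Matrix.conjTranspose_smul, conjTranspose_one]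
      rfl
    rw [hAH, Matrix.sub_mulVec, Matrix.smul_mulVec, Matrix.one_mulVec,
      dotProduct_sub, dotProduct_smul, smul_eq_mul]
  obtain ⟨hsre, hsim⟩ := Complex.nonneg_iff.mp (hS.dotProduct_mulVec_nonneg w)
  obtain ⟨htre, htim⟩ := Complex.nonneg_iff.mp (dotProduct_star_self_nonneg w)
  have hsim' : s.im = 0 := by rw [hsdef]; exact hsim.symm
  have htim' : t.im = 0 := by rw [htdef]; exact htim.symm
  have him1 : (z * (star x ⬝ᵥ w)).im = z.im * s.re := by
    rw [hq]
    simp only [Complex.mul_im, Complex.sub_im, Complex.sub_re, Complex.mul_re,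
      Complex.conj_re, Complex.conj_im]
    rw [hsim', htim']; ring
  have him2 : (z * (1 + star x ⬝ᵥ w)).im = z.im * (1 + s.re) := by
    rw [hq]
    simp only [Complex.mul_im, Complex.add_im, Complex.add_re, Complex.sub_im,
      Complex.sub_re, Complex.mul_re, Complex.mul_im, Complex.conj_re, Complex.conj_im,
      Complex.one_re, Complex.one_im]
    rw [hsim', htim']; ring
  constructor
  · rw [him1]
    positivity
  · have hpos : 0 < (z * (1 + star x ⬝ᵥ w)).im := by
      rw [him2]
      have : 0 ≤ s.re := by rw [hsdef]; exact hsre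
      nlinarith
    have hne : (1 + star x ⬝ᵥ w) ≠ 0 := by
      intro h
      rw [h, mul_zero] at hpos
      simp at hpos
    have habs : z.im ≤ ‖z‖ * ‖1 + star x ⬝ᵥ w‖ := by
      calc z.im ≤ (z * (1 + star x ⬝ᵥ w)).im := by rw [him2]; nlinarith
        _ ≤ ‖z * (1 + star x ⬝ᵥ w)‖ := Complex.im_le_norm _
        _ = ‖z‖ * ‖1 + star x ⬝ᵥ w‖ := norm_mul _ _
    rw [norm_div, norm_one, div_le_div_iff₀ (norm_pos_iff.mpr hne) hz]
    linarith [habs]
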